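/- Let p be a prime and let K = ℚ_p ⊕ ℚ_p be the split quadratic ℚ_p-algebra, with 𝒪_m = {(a,b) ∈ ℤ_p ⊕ ℤ_p : a ≡ b mod p^m} the order of conductor p^m. Then for every m ≥ 0 and n ≥ 0, the ring homomorphism K → M₂(ℚ_p), (a,b) ↦ [[a, 0], [p^{n−m}(a−b), b]], defines an optimal embedding of 𝒪_m into the standard Eichler order R_n^{Eic} of level p^n in M₂(ℤ_p). In particular, 𝒪_m can be optimally embedded in R_n^{Eic} for every m ≥ 0, i.e. h(m,n) ≠ 0 for every m ≥ 0. -/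

import Mathlib

/-!
# Optimal embeddings of the split quadratic algebra into Eichler orders
(Lemma `LemmaC0` of Longo–Rotger–de Vera-Piquero)

Here `K = ℚ_p ⊕ ℚ_p` is the split quadratic `ℚ_p`-algebra.  Its order of conductor
`p^m` is `𝒪_m = {(a,b) ∈ ℤ_p ⊕ ℤ_p : a ≡ b mod p^m}`, encoded via the `p`-adic norm:
`(a,b) ∈ 𝒪_m ↔ ‖a‖ ≤ 1 ∧ ‖b‖ ≤ 1 ∧ ‖a - b‖ ≤ p^{-m}`.  The standard Eichler order of
level `p^n` in `M₂(ℚ_p)` is the set of integral matrices whose lower-left entry is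
divisible by `p^n`, again encoded via the norm.
-/

/-- The order `𝒪_m = {(a,b) ∈ ℤ_p ⊕ ℤ_p : a ≡ b mod p^m}` of conductor `p^m` in the
split quadratic algebra `K = ℚ_p ⊕ ℚ_p`. -/
def splitQuadOrder (p : ℕ) [Fact p.Prime] (m : ℕ) : Set (ℚ_[p] × ℚ_[p]) :=
  {x | ‖x.1‖ ≤ 1 ∧ ‖x.2‖ ≤ 1 ∧ ‖x.1 - x.2‖ ≤ (p : ℝ) ^ (-(m : ℤ))}

/-- The standard Eichler order `R_n^{Eic} = {[[a,b],[c,d]] ∈ M₂(ℤ_p) : p^n ∣ c}` of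
level `p^n` in `M₂(ℚ_p)`. -/
def stdEichlerOrder (p : ℕ) [Fact p.Prime] (n : ℕ) :
    Set (Matrix (Fin 2) (Fin 2) ℚ_[p]) :=
  {A | (∀ i j, ‖A i j‖ ≤ 1) ∧ ‖A 1 0‖ ≤ (p : ℝ) ^ (-(n : ℤ))}

/-- **Lemma.** For every `m ≥ 0` and `n ≥ 0`, the ring homomorphism
`K → M₂(ℚ_p)`, `(a,b) ↦ [[a, 0], [p^{n-m}(a-b), b]]`, defines an optimal embedding of
`𝒪_m` into the standard Eichler order `R_n^{Eic}` of level `p^n`: it is a (unital)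
ring homomorphism and `φ(x) ∈ R_n^{Eic} ↔ x ∈ 𝒪_m`.  In particular `𝒪_m` can be
optimally embedded in `R_n^{Eic}` for every `m ≥ 0`, i.e. `h(m,n) ≠ 0`. -/
theorem splitQuadOrder_optimal_embedding (p : ℕ) [Fact p.Prime] (m n : ℕ)
    (φ : ℚ_[p] × ℚ_[p] → Matrix (Fin 2) (Fin 2) ℚ_[p])
    (hφ : ∀ x : ℚ_[p] × ℚ_[p],
      φ x = !![x.1, 0; (p : ℚ_[p]) ^ ((n : ℤ) - (m : ℤ)) * (x.1 - x.2), x.2]) :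
    (∀ x y, φ (x * y) = φ x * φ y) ∧
    (∀ x y, φ (x + y) = φ x + φ y) ∧
    φ 1 = 1 ∧
    (∀ x, φ x ∈ stdEichlerOrder p n ↔ x ∈ splitQuadOrder p m) ∧
    ∃ f : (ℚ_[p] × ℚ_[p]) →+* Matrix (Fin 2) (Fin 2) ℚ_[p],
      ∀ x, f x ∈ stdEichlerOrder p n ↔ x ∈ splitQuadOrder p m := by
  have hpprime : p.Prime := Fact.out
  have hp1 : (1:ℝ) ≤ p := by exact_mod_cast hpprime.one_lt.le
  have hppos : (0:ℝ) < p := by positivity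
  have hmul : ∀ x y : ℚ_[p] × ℚ_[p], φ (x * y) = φ x * φ y := by
    intro x y
    simp only [hφ]
    ext i j
    fin_cases i <;> fin_cases j <;>
      simp [Matrix.mul_apply, Fin.sum_univ_succ, Prod.fst_mul, Prod.snd_mul] <;> ring
  have hadd : ∀ x y : ℚ_[p] × ℚ_[p], φ (x + y) = φ x + φ y := by
    intro x y
    simp only [hφ]
    ext i j
    fin_cases i <;> fin_cases j <;>
      simp [Prod.fst_add, Prod.snd_add] <;> ring
  have hone : φ 1 = 1 := by
    rw [hφ]
    ext i j
    fin_cases i <;> fin_cases j <;> simp [Matrix.one_apply]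
  have hnorm : ∀ x : ℚ_[p] × ℚ_[p],
      ‖(p : ℚ_[p]) ^ ((n : ℤ) - (m : ℤ)) * (x.1 - x.2)‖
        = (p:ℝ) ^ ((m:ℤ)-(n:ℤ)) * ‖x.1 - x.2‖ := by
    intro x
    rw [norm_mul, Padic.norm_p_zpow]
    ring_nf
  have hkey : ∀ x : ℚ_[p] × ℚ_[p],
      ‖(p : ℚ_[p]) ^ ((n : ℤ) - (m : ℤ)) * (x.1 - x.2)‖ ≤ (p:ℝ) ^ (-(n:ℤ))
        ↔ ‖x.1 - x.2‖ ≤ (p:ℝ) ^ (-(m:ℤ)) := by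
    intro x
    rw [hnorm]
    have h : (p:ℝ) ^ (-(n:ℤ)) = (p:ℝ) ^ ((m:ℤ)-(n:ℤ)) * (p:ℝ) ^ (-(m:ℤ)) := by
      rw [← zpow_add₀ (ne_of_gt hppos)]; ring_nf
    rw [h, mul_le_mul_iff_right₀ (by positivity)]
  have hmem : ∀ x, φ x ∈ stdEichlerOrder p n ↔ x ∈ splitQuadOrder p m := by
    intro x
    rw [hφ]
    constructor
    · rintro ⟨hall, hc⟩
      refine ⟨?_, ?_, (hkey x).1 ?_⟩
      · simpa using hall 0 0
      · simpa using hall 1 1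
      · simpa using hc
    · rintro ⟨h1, h2, h3⟩
      have hc : ‖(p : ℚ_[p]) ^ ((n : ℤ) - (m : ℤ)) * (x.1 - x.2)‖ ≤ (p:ℝ) ^ (-(n:ℤ)) :=
        (hkey x).2 h3
      have hn1 : (p:ℝ) ^ (-(n:ℤ)) ≤ 1 := by
        calc (p:ℝ) ^ (-(n:ℤ)) ≤ (p:ℝ) ^ (0:ℤ) := by
              apply zpow_le_zpow_right₀ hp1; omega
          _ = 1 := zpow_zero _
      refine ⟨?_, by simpa using hc⟩
      intro i j
      fin_cases i <;> fin_cases j <;>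
        simp only [Fin.zero_eta, Fin.mk_one, Matrix.cons_val', Matrix.cons_val_zero,
          Matrix.cons_val_one, Matrix.head_cons, Matrix.empty_val', Matrix.cons_val_fin_one,
          Matrix.head_fin_const, Matrix.of_apply]
      · exact h1
      · simp
      · exact le_trans hc hn1
      · exact h2
  refine ⟨hmul, hadd, hone, hmem, ⟨⟨⟨⟨φ, hone⟩, hmul⟩, ?_, hadd⟩, hmem⟩⟩
  show φ 0 = 0
  rw [hφ]
  ext i j
  fin_cases i <;> fin_cases j <;> simp
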